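/- Jensen's inequality for zeros: let f be an entire function, 0 < r < R, and suppose f(0) \neq 0. Then the number N_f(r) of zeros of f (with multiplicity) in the closed disk of radius r satisfies N_f(r) \leq \log(M_R/M_r) / \log((R^2+r^2)/(2Rr)), where M_t = \max_{|z| \leq t} |f(z)|. -/

import Mathlib

open Complex Filter Set Metric


lemma key_ineq {r R : ℝ} (hr : 0 < r) (hrR : r < R) {a z : ℂ}
    (ha : ‖a‖ ≤ r) (hz : ‖z‖ ≤ r) :
    (R ^ 2 + r ^ 2) * ‖z - a‖ ≤
      2 * r * ‖(R : ℂ) ^ 2 - (starRingEnd ℂ) a * z‖ := by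
  set s := ‖a‖ with hs
  set t := ‖z‖ with ht
  have hs0 : 0 ≤ s := norm_nonneg a
  have ht0 : 0 ≤ t := norm_nonneg z
  set w := ((starRingEnd ℂ) a * z).re with hw
  set v := ((starRingEnd ℂ) a * z).im with hv
  have hst : w ^ 2 + v ^ 2 = s ^ 2 * t ^ 2 := by
    have h : Complex.normSq ((starRingEnd ℂ) a * z) = (s * t) ^ 2 := by
      rw [← Complex.sq_norm, norm_mul, Complex.norm_conj]
    rw [Complex.normSq_apply] at h
    nlinarith [h]
  have hw_lb : -(s * t) ≤ w := by
    have h1 : |w| ≤ ‖(starRingEnd ℂ) a * z‖ := Complex.abs_re_le_norm _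
    have h2 : ‖(starRingEnd ℂ) a * z‖ = s * t := by
      rw [norm_mul, Complex.norm_conj]
    nlinarith [abs_nonneg w, neg_abs_le w]
  have h1 : Complex.normSq (z - a) = t ^ 2 + s ^ 2 - 2 * w := by
    rw [Complex.normSq_sub, ← Complex.sq_norm, ← Complex.sq_norm]
    have h : (z * (starRingEnd ℂ) a).re = w := by rw [hw, mul_comm]
    rw [h]
  have h2 : Complex.normSq ((R : ℂ) ^ 2 - (starRingEnd ℂ) a * z)
      = R ^ 4 + s ^ 2 * t ^ 2 - 2 * R ^ 2 * w := by
    rw [Complex.normSq_sub]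
    have e1 : Complex.normSq ((R : ℂ) ^ 2) = R ^ 4 := by
      rw [← Complex.ofReal_pow, Complex.normSq_ofReal]; ring
    have e2 : Complex.normSq ((starRingEnd ℂ) a * z) = s ^ 2 * t ^ 2 := by
      rw [← Complex.sq_norm, norm_mul, Complex.norm_conj]; ring
    have e3 : ((R : ℂ) ^ 2 * (starRingEnd ℂ) ((starRingEnd ℂ) a * z)).re = R ^ 2 * w := by
      rw [← Complex.ofReal_pow, Complex.re_ofReal_mul]
      simp [hw]
    rw [e1, e2, e3]; ring
  have hR2 : (0:ℝ) < R ^ 2 - r ^ 2 := by nlinarith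
  have hs2 : s ^ 2 ≤ r ^ 2 := by nlinarith
  have ht2 : t ^ 2 ≤ r ^ 2 := by nlinarith
  have hstr : s * t ≤ r ^ 2 := by nlinarith
  have hst0 : 0 ≤ s * t := mul_nonneg hs0 ht0
  have c1 : (0:ℝ) ≤ (r ^ 2 - s ^ 2) * (r ^ 2 - t ^ 2) := by
    apply mul_nonneg <;> linarith
  have c2 : (0:ℝ) ≤ (r ^ 2 - s * t) * ((3 * r ^ 2 + R ^ 2) * (s * t) + r ^ 2 * (3 * R ^ 2 + r ^ 2)) := by
    apply mul_nonneg
    · linarith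
    · nlinarith
  have c3 : (0:ℝ) ≤ (w + s * t) * (R ^ 2 - r ^ 2) ^ 2 :=
    mul_nonneg (by linarith) (sq_nonneg _)
  have d1 : (0:ℝ) ≤ (R ^ 2 + r ^ 2) ^ 2 * ((r ^ 2 - s ^ 2) * (r ^ 2 - t ^ 2)) :=
    mul_nonneg (sq_nonneg _) c1
  have d2 : (0:ℝ) ≤ (R ^ 2 - r ^ 2) * ((r ^ 2 - s * t) * ((3 * r ^ 2 + R ^ 2) * (s * t) + r ^ 2 * (3 * R ^ 2 + r ^ 2))) :=
    mul_nonneg hR2.le c2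
  have d3 : (0:ℝ) ≤ r ^ 2 * ((w + s * t) * (R ^ 2 - r ^ 2) ^ 2) :=
    mul_nonneg (by positivity) c3
  have main : (R ^ 2 + r ^ 2) ^ 2 * (t ^ 2 + s ^ 2 - 2 * w) * r ^ 2 ≤
      (2 * r) ^ 2 * (R ^ 4 + s ^ 2 * t ^ 2 - 2 * R ^ 2 * w) * r ^ 2 := by
    linarith [d1, d2, d3]
  have hr2 : (0:ℝ) < r ^ 2 := by positivity
  have hsq : ((R ^ 2 + r ^ 2) * ‖z - a‖) ^ 2 ≤
      (2 * r * ‖(R : ℂ) ^ 2 - (starRingEnd ℂ) a * z‖) ^ 2 := by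
    rw [mul_pow, mul_pow, Complex.sq_norm, Complex.sq_norm, h1, h2]
    exact le_of_mul_le_mul_right (by linarith [main]) hr2
  have hA : 0 ≤ (R ^ 2 + r ^ 2) * ‖z - a‖ := by positivity
  have hB : 0 ≤ 2 * r * ‖(R : ℂ) ^ 2 - (starRingEnd ℂ) a * z‖ := by positivity
  exact pow_le_pow_iff_left₀ hA hB (by norm_num) |>.mp hsq


lemma order_transfer {f g u : ℂ → ℂ} {b : ℂ} (hfa : AnalyticAt ℂ f b) (hga : AnalyticAt ℂ g b)
    (hua : AnalyticAt ℂ u b) (hub : u b ≠ 0) (heq : ∀ᶠ z in nhds b, f z = u z * g z) {n : ℕ}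
    (hn : analyticOrderAt g b = n) : analyticOrderAt f b = n := by
  obtain ⟨h, hha, hhb, hev⟩ := hga.analyticOrderAt_eq_natCast.mp hn
  refine hfa.analyticOrderAt_eq_natCast.mpr ⟨fun z => u z * h z, hua.mul hha,
    mul_ne_zero hub hhb, ?_⟩
  filter_upwards [heq, hev] with z e1 e2
  rw [e1, e2]
  simp only [smul_eq_mul]
  ring

lemma factor_single (f : ℂ → ℂ) (hf : Differentiable ℂ f) (a : ℂ) (n : ℕ)
    (hn : analyticOrderAt f a = n) :
    ∃ g : ℂ → ℂ, Differentiable ℂ g ∧ ∀ z, f z = (z - a) ^ n * g z := by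
  obtain ⟨g', hg'an, hg'ne, hev⟩ := (hf.analyticAt a).analyticOrderAt_eq_natCast.mp hn
  refine ⟨fun z => if z = a then g' a else f z / (z - a) ^ n, ?_, ?_⟩
  · intro z
    by_cases hz : z = a
    · subst hz
      have hloc : (fun w => if w = z then g' z else f w / (w - z) ^ n) =ᶠ[nhds z] g' := by
        filter_upwards [hev] with w hw
        by_cases h : w = z
        · subst h; simp
        · simp only [h, if_false]
          rw [hw, smul_eq_mul]
          exact mul_div_cancel_left₀ _ (pow_ne_zero n (sub_ne_zero.mpr h))
      exact (hg'an.congr hloc.symm).differentiableAt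
    · have hopen : ∀ᶠ w in nhds z, w ≠ a := eventually_ne_nhds hz
      have hloc : (fun w => if w = a then g' a else f w / (w - a) ^ n)
          =ᶠ[nhds z] fun w => f w / (w - a) ^ n := by
        filter_upwards [hopen] with w hw; simp [hw]
      exact ((hf z).div (differentiableAt_id.sub_const a |>.pow n)
        (pow_ne_zero n (sub_ne_zero.mpr hz))).congr_of_eventuallyEq hloc
  · intro z
    by_cases hz : z = a
    · subst hz
      have := hev.self_of_nhds
      simp only [sub_self, smul_eq_mul] at this
      by_cases h : n = 0
      · simp [h, this]
      · simp [if_pos rfl, zero_pow h, this]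
    · simp only [hz, if_false]
      rw [mul_comm, div_mul_cancel₀ _ (pow_ne_zero n (sub_ne_zero.mpr hz))]

lemma factor_finset (Z : Finset ℂ) : ∀ (f : ℂ → ℂ) (hf : Differentiable ℂ f),
    (∀ a ∈ Z, ∃ n : ℕ, analyticOrderAt f a = n) →
    ∃ g : ℂ → ℂ, Differentiable ℂ g ∧
      ∀ z, f z = (∏ a ∈ Z, (z - a) ^ (analyticOrderAt f a).toNat) * g z := by
  induction Z using Finset.induction with
  | empty => exact fun f hf _ => ⟨f, hf, by simp⟩
  | @insert a Z ha ih =>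
    intro f hf hfin
    obtain ⟨n, hn⟩ := hfin a (Finset.mem_insert_self a Z)
    obtain ⟨g₁, hg₁, hfg₁⟩ := factor_single f hf a n hn
    have horder : ∀ b ∈ Z, analyticOrderAt g₁ b = analyticOrderAt f b := by
      intro b hb
      have hba : b ≠ a := fun h => ha (h ▸ hb)
      obtain ⟨m, hm⟩ := hfin b (Finset.mem_insert_of_mem hb)
      rw [hm]
      have hune : ((b - a) ^ n : ℂ) ≠ 0 := pow_ne_zero n (sub_ne_zero.mpr hba)
      refine order_transfer (hg₁.analyticAt b) (hf.analyticAt b)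
        (((analyticAt_id.sub analyticAt_const).pow n).inv hune) (inv_ne_zero hune) ?_ hm
      filter_upwards [eventually_ne_nhds hba] with z hz
      rw [hfg₁ z]
      have : ((z - a) ^ n : ℂ) ≠ 0 := pow_ne_zero n (sub_ne_zero.mpr hz)
      simp only [Pi.inv_apply, Pi.pow_apply, Pi.sub_apply, id_eq]
      field_simp
    obtain ⟨g, hg, hgg⟩ := ih g₁ hg₁ (fun b hb => by
      obtain ⟨m, hm⟩ := hfin b (Finset.mem_insert_of_mem hb)
      exact ⟨m, (horder b hb).trans hm⟩)
    refine ⟨g, hg, fun z => ?_⟩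
    rw [Finset.prod_insert ha, hfg₁ z, hgg z, hn]
    rw [Finset.prod_congr rfl (fun b hb => by rw [horder b hb])]
    simp only [ENat.toNat_coe]
    ring

theorem jensen_inequality_for_zeros
    (f : ℂ → ℂ) (hf : Differentiable ℂ f) (h0 : f 0 ≠ 0)
    (r R : ℝ) (hr : 0 < r) (hrR : r < R)
    (Z : Finset ℂ)
    (hZ : (Z : Set ℂ) = {z : ℂ | z ∈ Metric.closedBall (0 : ℂ) r ∧ f z = 0})
    (N : ℕ) (hN : N = ∑ z ∈ Z, (analyticOrderAt f z).toNat)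
    (Mr MR : ℝ)
    (hMr : IsGreatest ((fun z => ‖f z‖) '' Metric.closedBall (0 : ℂ) r) Mr)
    (hMR : IsGreatest ((fun z => ‖f z‖) '' Metric.closedBall (0 : ℂ) R) MR) :
    (N : ℝ) ≤ Real.log (MR / Mr) / Real.log ((R ^ 2 + r ^ 2) / (2 * R * r)) := by
  have hR0 : 0 < R := hr.trans hrR
  set m : ℂ → ℕ := fun a => (analyticOrderAt f a).toNat with hm
  -- finite orders
  have hfinN : ∀ a ∈ Z, ∃ n : ℕ, analyticOrderAt f a = n := by
    intro a _
    have hne : analyticOrderAt f a ≠ ⊤ := by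
      intro htop
      rw [analyticOrderAt_eq_top] at htop
      have heq : Set.EqOn f 0 Set.univ :=
        AnalyticOnNhd.eqOn_zero_of_preconnected_of_eventuallyEq_zero
          (fun z _ => hf.analyticAt z) isPreconnected_univ (Set.mem_univ a) htop
      exact h0 (heq (Set.mem_univ 0))
    obtain ⟨n, hn⟩ := WithTop.ne_top_iff_exists.mp hne
    exact ⟨n, hn.symm⟩
  obtain ⟨g, hg, hfg⟩ := factor_finset Z f hf hfinN
  -- members of Z are in the r-ball
  have haZ : ∀ a ∈ Z, ‖a‖ ≤ r := by
    intro a haz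
    have h1 : a ∈ (Z : Set ℂ) := haz
    rw [hZ] at h1
    simpa [Complex.dist_eq] using h1.1
  -- the point where Mr is attained
  obtain ⟨z₀, hz₀mem, hz₀⟩ := hMr.1
  have hz₀' : ‖f z₀‖ = Mr := hz₀
  have hz₀r : ‖z₀‖ ≤ r := by simpa [Complex.dist_eq] using hz₀mem
  have hMr0 : 0 < Mr := by
    have h1 : ‖f 0‖ ≤ Mr := hMr.2 ⟨0, by simpa using hr.le, rfl⟩
    have h2 : 0 < ‖f 0‖ := norm_pos_iff.mpr h0
    linarith
  have hMR0 : 0 < MR := by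
    have h1 : ‖f 0‖ ≤ MR := hMR.2 ⟨0, by simpa using hR0.le, rfl⟩
    have h2 : 0 < ‖f 0‖ := norm_pos_iff.mpr h0
    linarith
  -- auxiliary function
  set h : ℂ → ℂ := fun z => g z * ∏ a ∈ Z, ((R : ℂ) ^ 2 - (starRingEnd ℂ) a * z) ^ (m a)
    with hhdef
  have hh : Differentiable ℂ h := by
    apply hg.mul
    apply Differentiable.fun_finsetProd
    intro a _
    exact ((differentiable_const _).sub ((differentiable_const _).mul differentiable_id)).pow _
  -- |h| on closed ball via max modulus
  have habs : ∀ w : ℂ, ‖h w‖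
      = ‖g w‖ * ∏ a ∈ Z, (‖(R : ℂ) ^ 2 - (starRingEnd ℂ) a * w‖) ^ (m a) := by
    intro w
    rw [hhdef]
    simp only [norm_mul, norm_prod, norm_pow]
  have hfabs : ∀ w : ℂ, ‖f w‖
      = (∏ a ∈ Z, (‖w - a‖) ^ (m a)) * ‖g w‖ := by
    intro w
    rw [hfg w]
    simp only [norm_mul, norm_prod, norm_pow]; rfl
  have hsphere : ∀ w ∈ Metric.sphere (0 : ℂ) R, ‖h w‖ ≤ R ^ N * MR := by
    intro w hw
    have hwR : ‖w‖ = R := by simpa [Complex.dist_eq] using hw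
    have keyabs : ∀ a : ℂ, ‖(R : ℂ) ^ 2 - (starRingEnd ℂ) a * w‖
        = R * ‖w - a‖ := by
      intro a
      have e : (R : ℂ) ^ 2 - (starRingEnd ℂ) a * w = w * (starRingEnd ℂ) (w - a) := by
        have e2 : w * (starRingEnd ℂ) w = ((R : ℝ) ^ 2 : ℂ) := by
          rw [Complex.mul_conj]
          rw [Complex.normSq_eq_norm_sq, hwR]
          push_cast
          ring
        rw [map_sub, mul_sub, e2]
        ring
      rw [e, norm_mul, Complex.norm_conj, hwR]
    have hfw : ‖f w‖ ≤ MR :=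
      hMR.2 ⟨w, by simpa [Complex.dist_eq, hwR] using le_refl R, rfl⟩
    have e3 : ‖h w‖ = R ^ N * ‖f w‖ := by
      rw [habs w, hfabs w]
      rw [Finset.prod_congr rfl (fun a _ => by rw [keyabs a, mul_pow])]
      rw [Finset.prod_mul_distrib, Finset.prod_pow_eq_pow_sum, ← hN]
      ring
    rw [e3]
    have : (0:ℝ) ≤ R ^ N := by positivity
    exact mul_le_mul_of_nonneg_left hfw this
  have hmax : ‖h z₀‖ ≤ R ^ N * MR := by
    apply Complex.norm_le_of_forall_mem_frontier_norm_le (Metric.isBounded_ball (x := (0:ℂ)) (r := R))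
      hh.diffContOnCl
    · rw [frontier_ball (0 : ℂ) (ne_of_gt hR0)]
      exact hsphere
    · rw [closure_ball (0 : ℂ) (ne_of_gt hR0)]
      exact Metric.closedBall_subset_closedBall hrR.le hz₀mem
  -- product bound at z₀
  have hprod : (R ^ 2 + r ^ 2) ^ N * ∏ a ∈ Z, (‖z₀ - a‖) ^ (m a)
      ≤ (2 * r) ^ N * ∏ a ∈ Z, (‖(R : ℂ) ^ 2 - (starRingEnd ℂ) a * z₀‖) ^ (m a) := by
    have hstep : ∏ a ∈ Z, ((R ^ 2 + r ^ 2) * ‖z₀ - a‖) ^ (m a)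
        ≤ ∏ a ∈ Z, (2 * r * ‖(R : ℂ) ^ 2 - (starRingEnd ℂ) a * z₀‖) ^ (m a) := by
      apply Finset.prod_le_prod
      · intro a _
        positivity
      · intro a ha
        exact pow_le_pow_left₀ (by positivity) (key_ineq hr hrR (haZ a ha) hz₀r) (m a)
    calc (R ^ 2 + r ^ 2) ^ N * ∏ a ∈ Z, (‖z₀ - a‖) ^ (m a)
        = ∏ a ∈ Z, ((R ^ 2 + r ^ 2) * ‖z₀ - a‖) ^ (m a) := by
          rw [Finset.prod_congr rfl (fun a _ => mul_pow _ _ _), Finset.prod_mul_distrib,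
            Finset.prod_pow_eq_pow_sum, ← hN]
      _ ≤ ∏ a ∈ Z, (2 * r * ‖(R : ℂ) ^ 2 - (starRingEnd ℂ) a * z₀‖) ^ (m a) := hstep
      _ = (2 * r) ^ N * ∏ a ∈ Z, (‖(R : ℂ) ^ 2 - (starRingEnd ℂ) a * z₀‖) ^ (m a) := by
          rw [Finset.prod_congr rfl (fun a _ => mul_pow _ _ _), Finset.prod_mul_distrib,
            Finset.prod_pow_eq_pow_sum, ← hN]
  -- main inequality: Mr * (R²+r²)^N ≤ MR * (2Rr)^N
  have hmain : Mr * (R ^ 2 + r ^ 2) ^ N ≤ MR * (2 * R * r) ^ N := by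
    have hg0 : (0:ℝ) ≤ ‖g z₀‖ := norm_nonneg _
    have e4 : Mr * (R ^ 2 + r ^ 2) ^ N
        = ‖g z₀‖ * ((R ^ 2 + r ^ 2) ^ N * ∏ a ∈ Z, (‖z₀ - a‖) ^ (m a)) := by
      rw [← hz₀', hfabs z₀]; ring
    have e5 : ‖g z₀‖ * ((2 * r) ^ N * ∏ a ∈ Z,
        (‖(R : ℂ) ^ 2 - (starRingEnd ℂ) a * z₀‖) ^ (m a)) = (2 * r) ^ N * ‖h z₀‖ := by
      rw [habs z₀]; ring
    calc Mr * (R ^ 2 + r ^ 2) ^ N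
        = ‖g z₀‖ * ((R ^ 2 + r ^ 2) ^ N * ∏ a ∈ Z, (‖z₀ - a‖) ^ (m a)) := e4
      _ ≤ ‖g z₀‖ * ((2 * r) ^ N * ∏ a ∈ Z,
            (‖(R : ℂ) ^ 2 - (starRingEnd ℂ) a * z₀‖) ^ (m a)) :=
          mul_le_mul_of_nonneg_left hprod hg0
      _ = (2 * r) ^ N * ‖h z₀‖ := e5
      _ ≤ (2 * r) ^ N * (R ^ N * MR) :=
          mul_le_mul_of_nonneg_left hmax (by positivity)
      _ = MR * (2 * R * r) ^ N := by rw [mul_pow (2*R) r, mul_pow 2 R]; ring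
  -- conclude with logs
  set lam : ℝ := (R ^ 2 + r ^ 2) / (2 * R * r) with hlam
  have hden : (0:ℝ) < 2 * R * r := by positivity
  have hlam1 : 1 < lam := by
    rw [hlam, lt_div_iff₀ hden]
    nlinarith [sq_nonneg (R - r)]
  have hlampow : lam ^ N ≤ MR / Mr := by
    rw [hlam, div_pow, div_le_div_iff₀ (by positivity) hMr0]
    calc (R ^ 2 + r ^ 2) ^ N * Mr = Mr * (R ^ 2 + r ^ 2) ^ N := by ring
      _ ≤ MR * (2 * R * r) ^ N := hmain
  have hlog : Real.log (lam ^ N) ≤ Real.log (MR / Mr) :=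
    Real.log_le_log (by positivity) hlampow
  rw [Real.log_pow] at hlog
  rw [le_div_iff₀ (Real.log_pos hlam1)]
  exact hlog
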